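/- Let (A, 𝔫) be a commutative Noetherian local ring whose residue field k = A/𝔫 is algebraically closed, and let N be a nonzero finitely generated A-module whose endomorphism ring End_A(N) is local with Jacobson radical 𝔪. Then the ring homomorphism A → End_A(N)/𝔪 sending a ∈ A to the class of the endomorphism of multiplication by a is surjective with kernel 𝔫; equivalently, it induces an isomorphism of k onto the residue division ring End_A(N)/𝔪. -/

import Mathlib

open IsLocalRing Polynomial

/-- In a (possibly noncommutative) local ring, a left multiple of a nonunit is a nonunit. -/
lemma mul_nonunit_aux {R : Type*} [Ring R] [IsLocalRing R] {x : R} (hx : ¬IsUnit x) (r : R) :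
    ¬IsUnit (r * x) := by
  intro hu
  obtain ⟨u, hu'⟩ := hu
  have hyx : (↑u⁻¹ * r) * x = 1 := by
    rw [mul_assoc, ← hu', Units.inv_mul]
  set y : R := ↑u⁻¹ * r with hy
  have hidem : (x * y) * (x * y) = x * y := by
    rw [mul_assoc, ← mul_assoc y x y, hyx, one_mul]
  have hadd : (x * y) + (1 - x * y) = 1 := by abel
  rcases IsLocalRing.isUnit_or_isUnit_of_add_one hadd with h | h
  · have hxy1 : x * y = 1 := by
      obtain ⟨v, hv⟩ := h
      calc x * y = 1 * (x * y) := (one_mul _).symm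
        _ = (↑v⁻¹ * ↑v) * (x * y) := by rw [Units.inv_mul]
        _ = ↑v⁻¹ * ((x * y) * (x * y)) := by rw [hv, mul_assoc]
        _ = ↑v⁻¹ * (x * y) := by rw [hidem]
        _ = 1 := by rw [← hv, Units.inv_mul]
    exact hx ⟨⟨x, y, hxy1, hyx⟩, rfl⟩
  · obtain ⟨v, hv⟩ := h
    have h0 : (1 - x * y) * x = 0 := by
      rw [sub_mul, one_mul, mul_assoc, hyx, mul_one, sub_self]
    have hx0 : x = 0 := by
      calc x = (↑v⁻¹ * ↑v) * x := by rw [Units.inv_mul, one_mul]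
        _ = ↑v⁻¹ * ((1 - x * y) * x) := by rw [hv, mul_assoc]
        _ = 0 := by rw [h0, mul_zero]
    apply one_ne_zero (α := R)
    rw [← hyx, hx0, mul_zero]

/-- In a local ring, the nonunits are exactly the Jacobson radical of `⊥`. -/
lemma nonunit_iff_mem_jacobson_bot {R : Type*} [Ring R] [IsLocalRing R] (x : R) :
    ¬IsUnit x ↔ x ∈ Ideal.jacobson (⊥ : Ideal R) := by
  constructor
  · intro hx
    rw [Ideal.jacobson, Ideal.mem_sInf]
    rintro M ⟨-, hM⟩
    by_contra hxM
    have hne : M ≠ M ⊔ Ideal.span {x} := by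
      intro h
      exact hxM (h ▸ Submodule.mem_sup_right (Ideal.subset_span rfl))
    have hsup : M ⊔ Ideal.span {x} = ⊤ :=
      hM.1.2 _ (lt_of_le_of_ne le_sup_left hne)
    have h1 : (1 : R) ∈ M ⊔ Ideal.span {x} := hsup ▸ Submodule.mem_top
    obtain ⟨m, hm, z, hz, hmz⟩ := Submodule.mem_sup.mp h1
    obtain ⟨r, hr⟩ := Submodule.mem_span_singleton.mp hz
    have hrx : ¬IsUnit (r * x) := mul_nonunit_aux hx r
    have hmunit : IsUnit m := by
      rcases IsLocalRing.isUnit_or_isUnit_of_add_one hmz with h | h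
      · exact h
      · exact absurd (by rwa [← hr, smul_eq_mul] at h) hrx
    exact hM.ne_top (M.eq_top_of_isUnit_mem hm hmunit)
  · intro hx hu
    obtain ⟨M, hM⟩ := Ideal.exists_maximal R
    rw [Ideal.jacobson, Ideal.mem_sInf] at hx
    exact hM.ne_top (M.eq_top_of_isUnit_mem (hx ⟨bot_le, hM⟩) hu)

lemma list_prod_isUnit {M : Type*} [Monoid M] (l : List M)
    (h : ∀ x ∈ l, IsUnit x) : IsUnit l.prod := by
  induction l with
  | nil => simp
  | cons a t ih =>
    rw [List.prod_cons]
    exact (h a List.mem_cons_self).mul (ih fun x hx => h x (List.mem_cons_of_mem a hx))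

theorem stmt6 {A : Type*} [CommRing A] [IsNoetherianRing A] [IsLocalRing A]
    [IsAlgClosed (IsLocalRing.ResidueField A)]
    (N : Type*) [AddCommGroup N] [Module A N] [Nontrivial N] [Module.Finite A N]
    (hloc : IsLocalRing (Module.End A N)) :
    (∀ g : Module.End A N, ∃ a : A,
        g - algebraMap A (Module.End A N) a ∈
          Ideal.jacobson (⊥ : Ideal (Module.End A N))) ∧
    (∀ a : A,
        algebraMap A (Module.End A N) a ∈ Ideal.jacobson (⊥ : Ideal (Module.End A N)) ↔
          a ∈ IsLocalRing.maximalIdeal A) := by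
  set E := Module.End A N
  set J := Ideal.jacobson (⊥ : Ideal E) with hJ
  -- part 2
  have part2 : ∀ a : A, algebraMap A E a ∈ J ↔ a ∈ maximalIdeal A := by
    intro a
    rw [← nonunit_iff_mem_jacobson_bot]
    constructor
    · intro h
      by_contra han
      exact h (IsUnit.map _ (not_not.mp ((IsLocalRing.mem_maximalIdeal a).not.mp han)))
    · intro han hu
      rw [Module.End.isUnit_iff] at hu
      have key : (⊤ : Submodule A N) ≤ (maximalIdeal A) • ⊤ := by
        intro n _
        obtain ⟨m, hm⟩ := hu.2 n
        rw [Module.algebraMap_end_apply] at hm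
        rw [← hm]
        exact Submodule.smul_mem_smul han Submodule.mem_top
      have hbot : (⊤ : Submodule A N) = ⊥ :=
        Submodule.eq_bot_of_le_smul_of_le_jacobson_bot (maximalIdeal A) ⊤
          Module.Finite.fg_top key (maximalIdeal_le_jacobson ⊥)
      obtain ⟨n, hn⟩ := exists_ne (0 : N)
      exact hn ((Submodule.mem_bot A).mp (by rw [← hbot]; trivial))
  refine ⟨?_, part2⟩
  -- part 1
  intro g
  haveI : Nontrivial E := hloc.toNontrivial
  obtain ⟨p, hp, hpg⟩ := LinearMap.exists_monic_and_aeval_eq_zero A g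
  set k := ResidueField A
  set res := IsLocalRing.residue A
  set pbar := p.map res with hpbar
  have hpbarm : pbar.Monic := hp.map res
  have hsplit : pbar = (pbar.roots.map fun μ => X - C μ).prod :=
    (IsAlgClosed.splits pbar).eq_prod_roots_of_monic hpbarm
  have hres : Function.Surjective res := IsLocalRing.residue_surjective
  set s : k → A := Function.surjInv hres with hs
  have hsres : ∀ μ, res (s μ) = μ := fun μ => Function.surjInv_eq hres μ
  set L : List k := pbar.roots.toList with hL
  have hLcoe : (L : Multiset k) = pbar.roots := Multiset.coe_toList _
  set q : A[X] := (L.map fun μ => X - C (s μ)).prod with hq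
  have hqmap : q.map res = pbar := by
    rw [hq, Polynomial.map_list_prod, List.map_map]
    have h1 : (Polynomial.map res ∘ fun μ => X - C (s μ)) = fun μ : k => X - C μ := by
      funext μ
      simp [hsres μ]
    rw [h1]
    conv_rhs => rw [hsplit, ← hLcoe]
    rw [Multiset.map_coe, Multiset.prod_coe]
  have hcoeff : ∀ i, (p - q).coeff i ∈ maximalIdeal A := by
    intro i
    have hmap0 : (p - q).map res = 0 := by
      rw [Polynomial.map_sub, hqmap, ← hpbar, sub_self]
    have hc : res ((p - q).coeff i) = 0 := by
      rw [← Polynomial.coeff_map, hmap0, Polynomial.coeff_zero]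
    rwa [← Ideal.Quotient.eq_zero_iff_mem]
  have haevalJ : ∀ r : A[X], (∀ i, r.coeff i ∈ maximalIdeal A) → Polynomial.aeval g r ∈ J := by
    intro r hr
    rw [Polynomial.aeval_eq_sum_range]
    apply Submodule.sum_mem
    intro i _
    rw [Algebra.smul_def, Algebra.commutes]
    exact J.mul_mem_left _ ((part2 _).mpr (hr i))
  have hqJ : Polynomial.aeval g q ∈ J := by
    have h2 : Polynomial.aeval g q = Polynomial.aeval g (q - p) := by
      rw [map_sub, hpg, sub_zero]
    rw [h2]
    apply haevalJ
    intro i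
    have h3 := (maximalIdeal A).neg_mem (hcoeff i)
    rw [Polynomial.coeff_sub] at h3 ⊢
    simpa using h3
  have hprod : Polynomial.aeval g q = (L.map fun μ => g - algebraMap A E (s μ)).prod := by
    rw [hq, map_list_prod, List.map_map]
    congr 1
    apply List.map_congr_left
    intro μ _
    show Polynomial.aeval g (X - C (s μ)) = g - algebraMap A E (s μ)
    rw [map_sub, Polynomial.aeval_X, Polynomial.aeval_C]
  rw [hprod] at hqJ
  have hnu : ¬IsUnit ((L.map fun μ => g - algebraMap A E (s μ)).prod) :=
    (nonunit_iff_mem_jacobson_bot _).mpr hqJ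
  by_contra hcon
  push_neg at hcon
  apply hnu
  apply list_prod_isUnit
  intro x hx
  obtain ⟨μ, _, rfl⟩ := List.mem_map.mp hx
  by_contra hxu
  exact hcon (s μ) ((nonunit_iff_mem_jacobson_bot _).mp hxu)
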